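/- Let V=(d,Q,Δ) be a VASS, let s(v) and t(w) be configurations in Q×ℕ^d, and let ρ be a path. Then the monus run induced by ρ from s(v) ends in t(w) if and only if there is a subset Z⊆{1,…,d} and a vector v'≥v such that: (1) the classical run induced by ρ from s(v') exists and ends in t(w); (2) every coordinate z∈Z hits 0 in this classical run; and (3) for every j∈{1,…,d}∖Z, v'[j]=v[j]. -/

import Mathlib

/-- A transition of a `d`-dimensional VASS over state set `Q`:
a source state, an update vector in `ℤ^d`, and a target state. -/
abbrev VTrans (d : ℕ) (Q : Type*) := Q × (Fin d → ℤ) × Q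

/-- A vector addition system with states (VASS), given by its set of transitions. -/
structure VASS (d : ℕ) (Q : Type*) where
  Δ : Set (VTrans d Q)

variable {d : ℕ} {Q : Type*}

/-- A sequence of transitions is a path if consecutive states match. -/
def IsPath (ρ : List (VTrans d Q)) : Prop := ρ.Chain' (fun t t' => t.2.2 = t'.1)

/-- A path of the VASS `V`. -/
def PathIn (V : VASS d Q) (ρ : List (VTrans d Q)) : Prop :=
  IsPath ρ ∧ ∀ t ∈ ρ, t ∈ V.Δ

/-- The path starts at state `s` (any state works for the empty path). -/
def FromState (s : Q) (ρ : List (VTrans d Q)) : Prop :=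
  match ρ with
  | [] => True
  | t :: _ => t.1 = s

/-- The last state of the run induced by `ρ` from state `s`. -/
def endState (s : Q) (ρ : List (VTrans d Q)) : Q := (ρ.map (fun t => t.2.2)).getLastD s

/-- Cast a vector over `ℕ` to a vector over `ℤ`. -/
def ofNatVec (v : Fin d → ℕ) : Fin d → ℤ := fun j => (v j : ℤ)

/-- The `i`-th vector of the ℤ-run induced by the path `ρ` from initial vector `v`. -/
def zrun (v : Fin d → ℤ) (ρ : List (VTrans d Q)) (i : ℕ) : Fin d → ℤ :=
  v + ((ρ.take i).map (fun t => t.2.1)).sum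

/-- The last vector of the ℤ-run induced by `ρ` from `v`. -/
def zend (v : Fin d → ℤ) (ρ : List (VTrans d Q)) : Fin d → ℤ := zrun v ρ ρ.length

/-- One step of the monus semantics: add `z` and truncate at `0` componentwise. -/
def mstep (v : Fin d → ℕ) (z : Fin d → ℤ) : Fin d → ℕ := fun j => ((v j : ℤ) + z j).toNat

/-- The `i`-th vector of the monus run induced by the path `ρ` from initial vector `v`. -/
def mrun (v : Fin d → ℕ) (ρ : List (VTrans d Q)) (i : ℕ) : Fin d → ℕ :=
  (ρ.take i).foldl (fun u t => mstep u t.2.1) v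

/-- The last vector of the monus run induced by `ρ` from `v`. -/
def mend (v : Fin d → ℕ) (ρ : List (VTrans d Q)) : Fin d → ℕ := mrun v ρ ρ.length

/-- The classical run induced by `ρ` from `v` exists: no value of the ℤ-run
drops below zero in any coordinate. -/
def ClassicalOK (v : Fin d → ℕ) (ρ : List (VTrans d Q)) : Prop :=
  ∀ i ≤ ρ.length, ∀ j, 0 ≤ zrun (ofNatVec v) ρ i j

/-- Classical reachability `s(v) →* t(w)`. -/
def ClassicalReach (V : VASS d Q) (s : Q) (v : Fin d → ℕ) (t : Q) (w : Fin d → ℕ) : Prop :=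
  ∃ ρ, PathIn V ρ ∧ FromState s ρ ∧ endState s ρ = t ∧ ClassicalOK v ρ ∧
    zend (ofNatVec v) ρ = ofNatVec w

/-- Reachability in ℤ-semantics `s(v) →ℤ* t(w)`. -/
def ZReach (V : VASS d Q) (s : Q) (v : Fin d → ℤ) (t : Q) (w : Fin d → ℤ) : Prop :=
  ∃ ρ, PathIn V ρ ∧ FromState s ρ ∧ endState s ρ = t ∧ zend v ρ = w

/-- Reachability in monus semantics `s(v) ⇝* t(w)`. -/
def MonusReach (V : VASS d Q) (s : Q) (v : Fin d → ℕ) (t : Q) (w : Fin d → ℕ) : Prop :=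
  ∃ ρ, PathIn V ρ ∧ FromState s ρ ∧ endState s ρ = t ∧ mend v ρ = w

/-- Coordinate `j` hits `0` in the ℤ-run (equivalently, classical run) induced
by `ρ` from `v` (at some index `1 ≤ i ≤ k`). -/
def HitsZeroZ (v : Fin d → ℤ) (ρ : List (VTrans d Q)) (j : Fin d) : Prop :=
  ∃ i, 1 ≤ i ∧ i ≤ ρ.length ∧ zrun v ρ i j = 0

/-- Coordinate `j` hits `0` in the monus run induced by `ρ` from `v`. -/
def HitsZeroM (v : Fin d → ℕ) (ρ : List (VTrans d Q)) (j : Fin d) : Prop :=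
  ∃ i, 1 ≤ i ∧ i ≤ ρ.length ∧ mrun v ρ i j = 0

/-- The monus run induced by `ρ` from `v` is lossy: at some step, for some
coordinate, the actual change differs from the transition's update. -/
def Lossy (v : Fin d → ℕ) (ρ : List (VTrans d Q)) : Prop :=
  ∃ (i : Fin ρ.length) (j : Fin d),
    (mrun v ρ ((i : ℕ) + 1) j : ℤ) ≠ (mrun v ρ (i : ℕ) j : ℤ) + (ρ.get i).2.1 j

/-- `mi ρ s₀ v₀`: the coordinatewise minimum (with `0`) of all values along
the ℤ-run induced by `ρ` from `v`. -/
def mi (v : Fin d → ℤ) (ρ : List (VTrans d Q)) : Fin d → ℤ :=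
  fun j => min 0 ((Finset.range (ρ.length + 1)).inf' Finset.nonempty_range_add_one
    (fun i => zrun v ρ i j))

/-- The reverse VASS: `(p,z,q)` is a transition iff `(q,-z,p)` is one of `V`. -/
def revV (V : VASS d Q) : VASS d Q := ⟨{tr | (tr.2.2, -tr.2.1, tr.1) ∈ V.Δ}⟩

/-- Coverability in monus semantics. -/
def MonusCover (V : VASS d Q) (s : Q) (v : Fin d → ℕ) (t : Q) (w : Fin d → ℕ) : Prop :=
  ∃ w', w ≤ w' ∧ MonusReach V s v t w'

/-- Coverability in classical semantics. -/
def ClassicalCover (V : VASS d Q) (s : Q) (v : Fin d → ℕ) (t : Q) (w : Fin d → ℕ) : Prop :=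
  ∃ w', w ≤ w' ∧ ClassicalReach V s v t w'


section Aux
variable {d : ℕ} {Q : Type*}

lemma list_sum_apply (l : List (Fin d → ℤ)) (j : Fin d) :
    l.sum j = (l.map (fun f => f j)).sum := by
  induction l with
  | nil => rfl
  | cons a l ih => simp [List.sum_cons, ih]

lemma zrun_apply (v : Fin d → ℤ) (ρ : List (VTrans d Q)) (i : ℕ) (j : Fin d) :
    zrun v ρ i j = v j + ((ρ.take i).map (fun t => t.2.1 j)).sum := by
  simp [zrun, list_sum_apply, List.map_map, Function.comp_def]

lemma zrun_zero (v : Fin d → ℤ) (ρ : List (VTrans d Q)) : zrun v ρ 0 = v := by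
  funext j; simp [zrun_apply]

lemma zrun_succ {ρ : List (VTrans d Q)} {i : ℕ} (h : i < ρ.length) (v : Fin d → ℤ) (j : Fin d) :
    zrun v ρ (i+1) j = zrun v ρ i j + (ρ.get ⟨i, h⟩).2.1 j := by
  rw [zrun_apply, zrun_apply, List.take_succ, List.getElem?_eq_getElem h]
  simp only [Option.toList_some, List.map_append, List.map_cons, List.map_nil,
    List.sum_append, List.sum_cons, List.sum_nil, add_zero, List.get_eq_getElem]
  ring

lemma zrun_stab {ρ : List (VTrans d Q)} {i : ℕ} (h : ρ.length ≤ i) (v : Fin d → ℤ) :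
    zrun v ρ i = zrun v ρ ρ.length := by
  simp [zrun, List.take_of_length_le h, List.take_length]

lemma mstep_apply (u : Fin d → ℕ) (z : Fin d → ℤ) (j : Fin d) :
    mstep u z j = ((u j : ℤ) + z j).toNat := rfl

lemma mrun_zero (v : Fin d → ℕ) (ρ : List (VTrans d Q)) : mrun v ρ 0 = v := rfl

lemma mrun_succ {ρ : List (VTrans d Q)} {i : ℕ} (h : i < ρ.length) (v : Fin d → ℕ) :
    mrun v ρ (i+1) = mstep (mrun v ρ i) (ρ.get ⟨i, h⟩).2.1 := by
  unfold mrun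
  rw [List.take_succ, List.getElem?_eq_getElem h]
  simp only [Option.toList_some, List.foldl_append, List.foldl_cons, List.foldl_nil,
    List.get_eq_getElem]

lemma mrun_stab {ρ : List (VTrans d Q)} {i : ℕ} (h : ρ.length ≤ i) (v : Fin d → ℕ) :
    mrun v ρ i = mrun v ρ ρ.length := by
  simp [mrun, List.take_of_length_le h, List.take_length]

/-- Core formula: the monus run equals the ℤ-run shifted by the running minimum. -/
lemma mrun_formula (v : Fin d → ℕ) (ρ : List (VTrans d Q)) (j : Fin d) (i : ℕ) :
    (mrun v ρ i j : ℤ) = zrun (ofNatVec v) ρ i j -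
      min 0 ((Finset.range (i+1)).inf' Finset.nonempty_range_add_one
        (fun k => zrun (ofNatVec v) ρ k j)) := by
  induction i with
  | zero =>
      have h0 : (0:ℤ) ≤ (v j : ℤ) := by positivity
      simp [mrun_zero, zrun_zero, ofNatVec, Finset.range_one, min_eq_left h0]
  | succ i ih =>
      have hrec : (Finset.range (i+2)).inf' Finset.nonempty_range_add_one
          (fun k => zrun (ofNatVec v) ρ k j)
          = zrun (ofNatVec v) ρ (i+1) j ⊓ (Finset.range (i+1)).inf'
            Finset.nonempty_range_add_one (fun k => zrun (ofNatVec v) ρ k j) := by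
        simp [Finset.range_add_one, Finset.inf'_insert]
      have hle : (Finset.range (i+1)).inf' Finset.nonempty_range_add_one
          (fun k => zrun (ofNatVec v) ρ k j) ≤ zrun (ofNatVec v) ρ i j :=
        Finset.inf'_le _ (Finset.self_mem_range_succ i)
      by_cases h : i < ρ.length
      · rw [mrun_succ h, mstep_apply, Int.toNat_eq_max, hrec, zrun_succ h, ih]
        generalize (Finset.range (i+1)).inf' Finset.nonempty_range_add_one
          (fun k => zrun (ofNatVec v) ρ k j) = b at *
        generalize zrun (ofNatVec v) ρ i j = a at *
        generalize ((ρ.get ⟨i, h⟩).2.1 j) = c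
        omega
      · push_neg at h
        have h1 : ρ.length ≤ i + 1 := le_trans h (Nat.le_succ i)
        have hm : mrun v ρ (i+1) = mrun v ρ i := by
          rw [mrun_stab h1, mrun_stab h]
        have hz : zrun (ofNatVec v) ρ (i+1) = zrun (ofNatVec v) ρ i := by
          rw [zrun_stab h1, zrun_stab h]
        rw [hm, hrec, hz, ih]
        generalize (Finset.range (i+1)).inf' Finset.nonempty_range_add_one
          (fun k => zrun (ofNatVec v) ρ k j) = b at *
        generalize zrun (ofNatVec v) ρ i j = a at *
        omega

lemma mrun_mono {v u : Fin d → ℕ} {j : Fin d} (h : v j ≤ u j) (ρ : List (VTrans d Q)) :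
    ∀ i, mrun v ρ i j ≤ mrun u ρ i j := by
  intro i
  induction i with
  | zero => exact h
  | succ i ih =>
      by_cases hi : i < ρ.length
      · rw [mrun_succ hi, mrun_succ hi, mstep_apply, mstep_apply]
        have : ((mrun v ρ i j : ℤ) + (ρ.get ⟨i, hi⟩).2.1 j)
            ≤ ((mrun u ρ i j : ℤ) + (ρ.get ⟨i, hi⟩).2.1 j) := by
          exact add_le_add_left (by exact_mod_cast ih) _
        exact Int.toNat_le_toNat this
      · push_neg at hi
        rw [mrun_stab (le_trans hi (Nat.le_succ i)), mrun_stab (le_trans hi (Nat.le_succ i))]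
        rw [mrun_stab hi, mrun_stab hi] at ih
        exact ih

lemma mrun_coincide {v u : Fin d → ℕ} {j : Fin d} {ρ : List (VTrans d Q)} {i : ℕ}
    (h : mrun v ρ i j = mrun u ρ i j) :
    ∀ k, i ≤ k → mrun v ρ k j = mrun u ρ k j := by
  intro k hk
  induction k, hk using Nat.le_induction with
  | base => exact h
  | succ k hik ih =>
      by_cases hi : k < ρ.length
      · rw [mrun_succ hi, mrun_succ hi, mstep_apply, mstep_apply, ih]
      · push_neg at hi
        rw [mrun_stab (le_trans hi (Nat.le_succ k)), mrun_stab (le_trans hi (Nat.le_succ k))]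
        rw [mrun_stab hi, mrun_stab hi] at ih
        exact ih

end Aux

/-- (Characterization of monus reachability.) `s(v) ⇝ρ* t(w)` iff
there is `Z ⊆ {1,…,d}` and `v' ≥ v` such that (1) the classical run induced by `ρ`
from `s(v')` exists and ends in `t(w)`, (2) every coordinate in `Z` hits `0` in this
classical run, and (3) `v'[j] = v[j]` for every `j ∉ Z`. -/
theorem stmt7 {d : ℕ} {Q : Type*} (V : VASS d Q) (s t : Q) (ρ : List (VTrans d Q))
    (v w : Fin d → ℕ)
    (hpath : PathIn V ρ) (hfrom : FromState s ρ) (hend : endState s ρ = t) :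
    mend v ρ = w ↔
    ∃ (Z : Set (Fin d)) (v' : Fin d → ℕ), v ≤ v' ∧
      ClassicalOK v' ρ ∧ zend (ofNatVec v') ρ = ofNatVec w ∧
      (∀ z ∈ Z, HitsZeroZ (ofNatVec v') ρ z) ∧
      (∀ j ∉ Z, v' j = v j) := by
  constructor
  · intro hmend
    set L := ρ.length with hL
    set mi' : Fin d → ℤ := mi (ofNatVec v) ρ with hmi'
    have hmi_le0 : ∀ j, mi' j ≤ 0 := fun j => min_le_left _ _
    refine ⟨{j | mi' j < 0}, fun j => v j + (-(mi' j)).toNat, ?_, ?_, ?_, ?_, ?_⟩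
    · intro j; exact Nat.le_add_right _ _
    all_goals
      have hv'cast : ∀ j, ((v j + (-(mi' j)).toNat : ℕ) : ℤ) = (v j : ℤ) - mi' j := by
        intro j
        push_cast [Int.toNat_of_nonneg (neg_nonneg.2 (hmi_le0 j))]
        ring
      have hzr : ∀ i j, zrun (ofNatVec (fun j => v j + (-(mi' j)).toNat)) ρ i j
          = zrun (ofNatVec v) ρ i j - mi' j := by
        intro i j
        simp only [zrun_apply, ofNatVec, hv'cast]
        ring
      have hmi_le : ∀ j, ∀ i ≤ L, mi' j ≤ zrun (ofNatVec v) ρ i j := by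
        intro j i hi
        refine le_trans (min_le_right _ _) (Finset.inf'_le _ ?_)
        simpa [Finset.mem_range] using Nat.lt_succ_of_le hi
    · intro i hi j
      rw [hzr]
      have := hmi_le j i hi
      omega
    · funext j
      have hform := mrun_formula v ρ j L
      have hw : mrun v ρ L j = w j := congrFun hmend j
      have : zend (ofNatVec (fun j => v j + (-(mi' j)).toNat)) ρ j
          = zrun (ofNatVec v) ρ L j - mi' j := hzr L j
      rw [zend] at this ⊢
      rw [this]
      have : mi' j = min 0 ((Finset.range (L+1)).inf' Finset.nonempty_range_add_one
          (fun k => zrun (ofNatVec v) ρ k j)) := rfl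
      rw [this, ← hform, hw, ofNatVec]
    · intro z hz
      have hzlt : mi' z < 0 := hz
      have hinf : (Finset.range (L+1)).inf' Finset.nonempty_range_add_one
          (fun k => zrun (ofNatVec v) ρ k z) < 0 := by
        by_contra hc
        push_neg at hc
        have : mi' z = 0 := min_eq_left hc
        omega
      have hmi_eq : mi' z = (Finset.range (L+1)).inf' Finset.nonempty_range_add_one
          (fun k => zrun (ofNatVec v) ρ k z) := min_eq_right (le_of_lt hinf)
      obtain ⟨i, hi_mem, hi_eq⟩ := Finset.exists_mem_eq_inf'
        (Finset.nonempty_range_add_one (n := L))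
        (fun k => zrun (ofNatVec v) ρ k z)
      have hiL : i ≤ L := by simpa [Finset.mem_range, Nat.lt_succ_iff] using hi_mem
      have hi_pos : 1 ≤ i := by
        rcases Nat.eq_zero_or_pos i with h0 | h0
        · exfalso
          have : zrun (ofNatVec v) ρ 0 z = (v z : ℤ) := by simp [zrun_zero, ofNatVec]
          rw [h0] at hi_eq
          have hv0 : (0:ℤ) ≤ (v z : ℤ) := by positivity
          omega
        · exact h0
      exact ⟨i, hi_pos, hiL, by rw [hzr, hmi_eq, hi_eq]; ring⟩
    · intro j hj
      simp only [Set.mem_setOf_eq, not_lt] at hj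
      have : mi' j = 0 := le_antisymm (hmi_le0 j) hj
      simp [this]
  · rintro ⟨Z, v', hle, hok, hzend, hhits, heq⟩
    funext j
    set L := ρ.length with hL
    have hinf0 : ∀ i ≤ L, min 0 ((Finset.range (i+1)).inf' Finset.nonempty_range_add_one
        (fun k => zrun (ofNatVec v') ρ k j)) = 0 := by
      intro i hi
      refine min_eq_left ?_
      refine Finset.le_inf' _ _ ?_
      intro k hk
      have hk' : k ≤ L := le_trans (Nat.lt_succ_iff.mp (Finset.mem_range.mp hk)) hi
      exact hok k hk' j
    have hzendj : zrun (ofNatVec v') ρ L j = (w j : ℤ) := congrFun hzend j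
    by_cases hjZ : j ∈ Z
    · obtain ⟨i₀, h1, h2, h0⟩ := hhits j hjZ
      have hform' : (mrun v' ρ i₀ j : ℤ) = zrun (ofNatVec v') ρ i₀ j := by
        rw [mrun_formula, hinf0 i₀ h2, sub_zero]
      have hm0 : mrun v' ρ i₀ j = 0 := by
        have := hform'.trans h0
        exact_mod_cast this
      have hmv0 : mrun v ρ i₀ j = 0 :=
        Nat.le_zero.mp (hm0 ▸ mrun_mono (hle j) ρ i₀)
      have hco : mrun v ρ L j = mrun v' ρ L j :=
        mrun_coincide (hmv0.trans hm0.symm) L h2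
      have hformL : (mrun v' ρ L j : ℤ) = zrun (ofNatVec v') ρ L j := by
        rw [mrun_formula, hinf0 L le_rfl, sub_zero]
      have : (mrun v ρ L j : ℤ) = (w j : ℤ) := by
        rw [hco, hformL, hzendj]
      exact_mod_cast this
    · have hvv : v' j = v j := heq j hjZ
      have hzsame : ∀ k, zrun (ofNatVec v) ρ k j = zrun (ofNatVec v') ρ k j := by
        intro k
        simp [zrun_apply, ofNatVec, hvv]
      have hinf0' : min 0 ((Finset.range (L+1)).inf' Finset.nonempty_range_add_one
          (fun k => zrun (ofNatVec v) ρ k j)) = 0 := by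
        simp only [hzsame]
        exact hinf0 L le_rfl
      have : (mrun v ρ L j : ℤ) = (w j : ℤ) := by
        rw [mrun_formula, hinf0', sub_zero, hzsame, hzendj]
      exact_mod_cast this
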